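/- arXiv:2211.14503 — 2 statements merged into one kernel-verified Lean document; each statement's English description precedes it below -/
import Mathlib

section
/- Let w ~ N(0, I_{n}) and b ~ N(0,1) be independent, and let x, x̃ ∈ ℝⁿ and ω ∈ ℝ. Then E[sin(ω(wᵀx + b)) · sin(ω(wᵀx̃ + b))] = (1/2)(exp(-(ω²/2)‖x - x̃‖₂²) - exp(-(ω²/2)‖x + x̃‖₂²) · exp(-2ω²)). -/
open MeasureTheory ProbabilityTheory Real Complex
open scoped NNReal ENNReal

lemma gauss_cexp (a : ℝ) :
    ∫ t : ℝ, Complex.exp ((a * t : ℝ) * Complex.I) ∂(gaussianReal 0 1) =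
      Complex.exp (-(a ^ 2 : ℝ) / 2) := by
  rw [gaussianReal_of_var_ne_zero 0 one_ne_zero]
  have hmeas : Measurable fun x => Real.toNNReal (gaussianPDFReal 0 1 x) :=
    (measurable_gaussianPDFReal 0 1).real_toNNReal
  have hpdf : gaussianPDF 0 1 = fun x => ((Real.toNNReal (gaussianPDFReal 0 1 x) : ℝ≥0) : ℝ≥0∞) := rfl
  rw [hpdf, integral_withDensity_eq_integral_smul hmeas]
  have hpt : ∀ t : ℝ, (Real.toNNReal (gaussianPDFReal 0 1 t)) • Complex.exp ((a * t : ℝ) * Complex.I)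
      = ((Real.sqrt (2 * π))⁻¹ : ℂ) * Complex.exp (-(1/2 : ℂ) * t ^ 2 + (a * Complex.I) * t + 0) := by
    intro t
    have h0 : (Real.toNNReal (gaussianPDFReal 0 1 t)) • Complex.exp ((a * t : ℝ) * Complex.I)
        = ((gaussianPDFReal 0 1 t : ℝ) : ℂ) * Complex.exp ((a * t : ℝ) * Complex.I) := by
      rw [NNReal.smul_def, Real.coe_toNNReal _ (gaussianPDFReal_nonneg 0 1 t), Complex.real_smul]
    rw [h0]
    have h1 : gaussianPDFReal 0 1 t = (Real.sqrt (2 * π))⁻¹ * Real.exp (-(t ^ 2) / 2) := by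
      simp [gaussianPDFReal]
    rw [h1]
    push_cast
    rw [mul_assoc, ← Complex.exp_add]
    congr 2
    ring
  rw [integral_congr_ae (Filter.Eventually.of_forall hpt), integral_const_mul,
    integral_cexp_quadratic (by norm_num : (-(1/2 : ℂ)).re < 0) (a * Complex.I) 0]
  have h2 : ((π : ℂ) / -(-(1/2 : ℂ))) ^ (1/2 : ℂ) = ((Real.sqrt (2 * π) : ℝ) : ℂ) := by
    rw [Real.sqrt_eq_rpow]
    rw [show ((2 * π : ℝ) ^ ((1:ℝ)/2) : ℝ) = ((2 * π : ℝ) ^ ((1:ℝ)/2) : ℝ) from rfl]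
    rw [Complex.ofReal_cpow (by positivity)]
    push_cast
    norm_num
    ring_nf
  rw [h2]
  have h3 : (Real.sqrt (2 * π) : ℂ) ≠ 0 := by
    simp only [ne_eq, Complex.ofReal_eq_zero]
    positivity
  have h4 : (0 : ℂ) - (a * Complex.I) ^ 2 / (4 * -(1/2 : ℂ)) = ((-(a ^ 2 : ℝ) / 2 : ℝ) : ℂ) := by
    have hI : Complex.I ^ 2 = -1 := Complex.I_sq
    push_cast
    ring_nf
    rw [hI]
    ring
  rw [h4, inv_mul_cancel_left₀ h3]
  push_cast
  ring_nf

lemma pi_cexp : ∀ (n : ℕ) (a : Fin n → ℝ),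
    ∫ w : Fin n → ℝ, Complex.exp ((∑ j, a j * w j : ℝ) * Complex.I)
        ∂(Measure.pi fun _ : Fin n => gaussianReal 0 1) =
      Complex.exp (-(∑ j, a j ^ 2 : ℝ) / 2) := by
  intro n
  induction n with
  | zero =>
      intro a
      simp [integral_const]
  | succ n ih =>
      intro a
      have h := (measurePreserving_piFinSuccAbove
        (fun _ : Fin (n + 1) => gaussianReal 0 1) 0).symm
      rw [← h.integral_comp']
      simp_rw [MeasurableEquiv.piFinSuccAbove_symm_apply, Fin.insertNthEquiv,
        Equiv.coe_fn_mk, Fin.insertNth_zero, cast_eq]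
      have hpt : ∀ p : ℝ × (Fin n → ℝ),
          Complex.exp ((∑ j, a j * (Fin.cons p.1 p.2 : Fin (n+1) → ℝ) j : ℝ) * Complex.I)
            = Complex.exp ((a 0 * p.1 : ℝ) * Complex.I) *
              Complex.exp ((∑ j, a (Fin.succ j) * p.2 j : ℝ) * Complex.I) := by
        intro p
        rw [← Complex.exp_add, Fin.sum_univ_succ]
        simp only [Fin.cons_zero, Fin.cons_succ]
        push_cast
        ring_nf
      rw [integral_congr_ae (Filter.Eventually.of_forall hpt),
        integral_prod_mul (fun t : ℝ => Complex.exp ((a 0 * t : ℝ) * Complex.I))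
          (fun w : Fin n → ℝ => Complex.exp ((∑ j, a (Fin.succ j) * w j : ℝ) * Complex.I)),
        gauss_cexp, ih, ← Complex.exp_add, Fin.sum_univ_succ]
      push_cast
      ring_nf

lemma master_cos {n : ℕ} (a : Fin n → ℝ) (β : ℝ) :
    ∫ p : (Fin n → ℝ) × ℝ, Real.cos ((∑ j, a j * p.1 j) + β * p.2)
        ∂((Measure.pi fun _ : Fin n => gaussianReal 0 1).prod (gaussianReal 0 1)) =
      Real.exp (-((∑ j, a j ^ 2) + β ^ 2) / 2) := by
  set μ := (Measure.pi fun _ : Fin n => gaussianReal 0 1).prod (gaussianReal 0 1)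
  have hcont : Continuous fun p : (Fin n → ℝ) × ℝ => (∑ j, a j * p.1 j) + β * p.2 := by
    fun_prop
  have hint : Integrable (fun p : (Fin n → ℝ) × ℝ =>
      Complex.exp (((∑ j, a j * p.1 j) + β * p.2 : ℝ) * Complex.I)) μ := by
    refine (integrable_const (1 : ℝ)).mono'
      ((Complex.continuous_exp.comp ((Complex.continuous_ofReal.comp hcont).mul
        continuous_const)).aestronglyMeasurable) ?_
    filter_upwards with p
    rw [Complex.norm_exp_ofReal_mul_I]
  have hre : ∀ p : (Fin n → ℝ) × ℝ, Real.cos ((∑ j, a j * p.1 j) + β * p.2)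
      = (Complex.exp (((∑ j, a j * p.1 j) + β * p.2 : ℝ) * Complex.I)).re :=
    fun p => (Complex.exp_ofReal_mul_I_re _).symm
  have hsplit : ∀ p : (Fin n → ℝ) × ℝ,
      Complex.exp (((∑ j, a j * p.1 j) + β * p.2 : ℝ) * Complex.I)
        = Complex.exp ((∑ j, a j * p.1 j : ℝ) * Complex.I) *
          Complex.exp ((β * p.2 : ℝ) * Complex.I) := by
    intro p
    rw [← Complex.exp_add]
    push_cast
    ring_nf
  have hval : ∫ p, Complex.exp (((∑ j, a j * p.1 j) + β * p.2 : ℝ) * Complex.I) ∂μ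
      = ((Real.exp (-((∑ j, a j ^ 2) + β ^ 2) / 2) : ℝ) : ℂ) := by
    rw [integral_congr_ae (Filter.Eventually.of_forall hsplit),
      integral_prod_mul (fun w : Fin n → ℝ => Complex.exp ((∑ j, a j * w j : ℝ) * Complex.I))
        (fun t : ℝ => Complex.exp ((β * t : ℝ) * Complex.I)),
      pi_cexp, gauss_cexp, ← Complex.exp_add]
    have : (-(∑ j, a j ^ 2 : ℝ) / 2 : ℂ) + (-(β ^ 2 : ℝ) / 2 : ℂ)
        = ((-((∑ j, a j ^ 2) + β ^ 2) / 2 : ℝ) : ℂ) := by push_cast; ring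
    rw [this, ← Complex.ofReal_exp]
  have h5 := Complex.reCLM.integral_comp_comm hint
  simp only [Complex.reCLM_apply] at h5
  rw [integral_congr_ae (Filter.Eventually.of_forall hre), h5, hval, Complex.ofReal_re]

theorem shallow_ssn_nngp (n : ℕ) (ω : ℝ) (x x' : Fin n → ℝ) :
    ∫ p : (Fin n → ℝ) × ℝ,
        Real.sin (ω * ((∑ j, p.1 j * x j) + p.2)) *
          Real.sin (ω * ((∑ j, p.1 j * x' j) + p.2))
        ∂((Measure.pi fun _ : Fin n => gaussianReal 0 1).prod (gaussianReal 0 1)) =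
      1 / 2 * (Real.exp (-(ω ^ 2 / 2) * ∑ j, (x j - x' j) ^ 2) -
        Real.exp (-(ω ^ 2 / 2) * ∑ j, (x j + x' j) ^ 2) * Real.exp (-2 * ω ^ 2)) := by
  set μ := (Measure.pi fun _ : Fin n => gaussianReal 0 1).prod (gaussianReal 0 1) with hμ
  have key : ∀ s t : ℝ, Real.sin s * Real.sin t
      = 1 / 2 * (Real.cos (s - t) - Real.cos (s + t)) := by
    intro s t
    rw [Real.cos_sub, Real.cos_add]
    ring
  have hpt : ∀ p : (Fin n → ℝ) × ℝ,
      Real.sin (ω * ((∑ j, p.1 j * x j) + p.2)) * Real.sin (ω * ((∑ j, p.1 j * x' j) + p.2))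
        = 1 / 2 * (Real.cos ((∑ j, (ω * (x j - x' j)) * p.1 j) + 0 * p.2)
          - Real.cos ((∑ j, (ω * (x j + x' j)) * p.1 j) + (2 * ω) * p.2)) := by
    intro p
    rw [key]
    congr 2
    · have h : ∀ j ∈ Finset.univ, (ω * (x j - x' j)) * p.1 j
          = ω * (p.1 j * x j) - ω * (p.1 j * x' j) := fun j _ => by ring
      rw [Finset.sum_congr rfl h, Finset.sum_sub_distrib, ← Finset.mul_sum, ← Finset.mul_sum]
      ring
    · have h : ∀ j ∈ Finset.univ, (ω * (x j + x' j)) * p.1 j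
          = ω * (p.1 j * x j) + ω * (p.1 j * x' j) := fun j _ => by ring
      rw [Finset.sum_congr rfl h, Finset.sum_add_distrib, ← Finset.mul_sum, ← Finset.mul_sum]
      ring
  have hintc : ∀ (a : Fin n → ℝ) (β : ℝ), Integrable
      (fun p : (Fin n → ℝ) × ℝ => Real.cos ((∑ j, a j * p.1 j) + β * p.2)) μ := by
    intro a β
    have hcont : Continuous fun p : (Fin n → ℝ) × ℝ => (∑ j, a j * p.1 j) + β * p.2 := by
      fun_prop
    refine (integrable_const (1 : ℝ)).mono'
      (Real.continuous_cos.comp hcont).aestronglyMeasurable ?_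
    filter_upwards with p
    rw [Real.norm_eq_abs]
    exact Real.abs_cos_le_one _
  rw [integral_congr_ae (Filter.Eventually.of_forall hpt), integral_const_mul,
    integral_sub (hintc _ _) (hintc _ _), master_cos, master_cos]
  have e1 : (∑ j, (ω * (x j - x' j)) ^ 2) = ω ^ 2 * ∑ j, (x j - x' j) ^ 2 := by
    rw [Finset.mul_sum]
    exact Finset.sum_congr rfl fun j _ => by ring
  have e2 : (∑ j, (ω * (x j + x' j)) ^ 2) = ω ^ 2 * ∑ j, (x j + x' j) ^ 2 := by
    rw [Finset.mul_sum]
    exact Finset.sum_congr rfl fun j _ => by ring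
  rw [e1, e2, ← Real.exp_add,
    show -(ω ^ 2 * (∑ j, (x j - x' j) ^ 2) + 0 ^ 2) / 2
      = -(ω ^ 2 / 2) * ∑ j, (x j - x' j) ^ 2 from by ring,
    show -(ω ^ 2 * (∑ j, (x j + x' j) ^ 2) + (2 * ω) ^ 2) / 2
      = -(ω ^ 2 / 2) * (∑ j, (x j + x' j) ^ 2) + -2 * ω ^ 2 from by ring]
end

section
/- Let w ~ N(0, I_{n}) and b ~ N(0,1) be independent, and let x, x̃ ∈ ℝⁿ and ω ∈ ℝ. Then E[cos(ω(wᵀx + b)) · cos(ω(wᵀx̃ + b))] = (1/2)(exp(-(ω²/2)‖x - x̃‖₂²) + exp(-(ω²/2)‖x + x̃‖₂²) · exp(-2ω²)). -/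
open MeasureTheory ProbabilityTheory

noncomputable def gpdf : ℝ → NNReal := fun y => (gaussianPDFReal 0 1 y).toNNReal

lemma gauss_eq : (gaussianReal 0 1 : Measure ℝ) = volume.withDensity (fun y => (gpdf y : ENNReal)) := by
  rw [gaussianReal_of_var_ne_zero 0 one_ne_zero]
  rfl

lemma gpdf_meas : Measurable gpdf := (measurable_gaussianPDFReal 0 1).real_toNNReal

lemma integral_gauss_cexp (a : ℂ) :
    ∫ y : ℝ, Complex.exp (a * y) ∂(gaussianReal 0 1) = Complex.exp (a ^ 2 / 2) := by
  rw [gauss_eq, integral_withDensity_eq_integral_smul gpdf_meas _]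
  have h1 : ∀ y : ℝ, gpdf y • Complex.exp (a * y)
      = ((Real.sqrt (2 * Real.pi) : ℂ))⁻¹ * Complex.exp ((-(1/2) : ℂ) * y ^ 2 + a * y + 0) := by
    intro y
    have hnn : 0 ≤ gaussianPDFReal 0 1 y := gaussianPDFReal_nonneg 0 1 y
    have h0 : gpdf y • Complex.exp (a * y) = ((gaussianPDFReal 0 1 y : ℝ) : ℂ) * Complex.exp (a * y) := by
      rw [NNReal.smul_def, Complex.real_smul]
      congr 2
      simp [gpdf, Real.coe_toNNReal _ hnn]
    rw [h0, gaussianPDFReal_def]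
    push_cast
    rw [mul_one, mul_assoc, ← Complex.exp_add]
    congr 2
    ring
  simp_rw [h1]
  rw [integral_const_mul, integral_cexp_quadratic (by norm_num) a 0]
  have hπ : (0:ℝ) < 2 * Real.pi := by positivity
  have h3 : ((Real.pi : ℂ) / -(-(1/2))) = ((2 * Real.pi : ℝ) : ℂ) := by push_cast; ring
  have h4 : ((2 * Real.pi : ℝ) : ℂ) ^ (1/2 : ℂ) = (Real.sqrt (2 * Real.pi) : ℂ) := by
    rw [show (1/2 : ℂ) = ((1/2 : ℝ) : ℂ) by norm_num, ← Complex.ofReal_cpow hπ.le,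
      Real.sqrt_eq_rpow]
  have h5 : (Real.sqrt (2 * Real.pi) : ℂ) ≠ 0 := by
    simpa using (Real.sqrt_pos.mpr hπ).ne'
  rw [h3, h4, ← mul_assoc, inv_mul_cancel₀ h5, one_mul]
  congr 1
  ring

def GaussR : Type := ℝ

instance : MeasurableSpace GaussR := inferInstanceAs (MeasurableSpace ℝ)
noncomputable instance : MeasureSpace GaussR := ⟨(gaussianReal 0 1 : Measure ℝ)⟩
instance : SigmaFinite (volume : Measure GaussR) :=
  inferInstanceAs (SigmaFinite (gaussianReal 0 1 : Measure ℝ))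

lemma integral_gauss_pi_cexp {n : ℕ} (a : Fin n → ℝ) :
    ∫ w : Fin n → ℝ, Complex.exp (Complex.I * (∑ j, a j * w j))
        ∂(Measure.pi fun _ : Fin n => gaussianReal 0 1)
      = Complex.exp (-(∑ j, (a j) ^ 2) / 2) := by
  have h1 : ∀ w : Fin n → ℝ, Complex.exp (Complex.I * (∑ j, a j * w j))
      = ∏ j, Complex.exp ((Complex.I * a j) * w j) := by
    intro w
    rw [← Complex.exp_sum]
    congr 1
    push_cast
    rw [Finset.mul_sum]
    exact Finset.sum_congr rfl fun j _ => by ring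
  simp_rw [h1]
  have h2 : (∫ w : Fin n → ℝ, ∏ j, Complex.exp ((Complex.I * a j) * w j)
        ∂(Measure.pi fun _ : Fin n => gaussianReal 0 1))
      = ∫ w : Fin n → GaussR, ∏ j, Complex.exp ((Complex.I * a j) * (show ℝ from w j)) := rfl
  rw [h2, volume_pi, integral_fintype_prod_eq_prod
    (fun j (y : GaussR) => Complex.exp ((Complex.I * a j) * (show ℝ from y)))]
  have h3 : ∀ j, (∫ y : GaussR, Complex.exp ((Complex.I * a j) * (show ℝ from y)))
      = Complex.exp ((Complex.I * a j) ^ 2 / 2) := fun j => integral_gauss_cexp _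
  simp_rw [h3, ← Complex.exp_sum]
  congr 1
  have h4 : ∀ i : Fin n, (Complex.I * (a i : ℂ)) ^ 2 = -((a i : ℂ) ^ 2) := fun i => by
    rw [mul_pow, Complex.I_sq]; ring
  simp_rw [h4, neg_div, Finset.sum_neg_distrib, ← Finset.sum_div]
  push_cast
  ring

lemma key_cos {n : ℕ} (a : Fin n → ℝ) (κ : ℝ) :
    ∫ p : (Fin n → ℝ) × ℝ, Real.cos ((∑ j, a j * p.1 j) + κ * p.2)
        ∂((Measure.pi fun _ : Fin n => gaussianReal 0 1).prod (gaussianReal 0 1))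
      = Real.exp (-((∑ j, (a j) ^ 2) + κ ^ 2) / 2) := by
  have hL : Measurable fun p : (Fin n → ℝ) × ℝ => (∑ j, a j * p.1 j) + κ * p.2 := by
    fun_prop
  have hmeas : Measurable fun p : (Fin n → ℝ) × ℝ =>
      Complex.exp (Complex.I * ((∑ j, a j * p.1 j) + κ * p.2 : ℝ)) :=
    Complex.measurable_exp.comp (measurable_const.mul (Complex.measurable_ofReal.comp hL))
  have hint : Integrable (fun p : (Fin n → ℝ) × ℝ =>
      Complex.exp (Complex.I * ((∑ j, a j * p.1 j) + κ * p.2 : ℝ)))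
      ((Measure.pi fun _ : Fin n => gaussianReal 0 1).prod (gaussianReal 0 1)) := by
    refine Integrable.mono' (integrable_const 1) hmeas.aestronglyMeasurable ?_
    filter_upwards with p
    rw [show Complex.I * (((∑ j, a j * p.1 j) + κ * p.2 : ℝ) : ℂ)
      = (((∑ j, a j * p.1 j) + κ * p.2 : ℝ) : ℂ) * Complex.I by ring]
    rw [Complex.norm_exp_ofReal_mul_I]
  have hre : ∀ p : (Fin n → ℝ) × ℝ, Real.cos ((∑ j, a j * p.1 j) + κ * p.2)
      = (Complex.exp (Complex.I * ((∑ j, a j * p.1 j) + κ * p.2 : ℝ))).re := by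
    intro p
    rw [show Complex.I * (((∑ j, a j * p.1 j) + κ * p.2 : ℝ) : ℂ)
      = (((∑ j, a j * p.1 j) + κ * p.2 : ℝ) : ℂ) * Complex.I from mul_comm _ _,
      Complex.exp_ofReal_mul_I_re]
  simp_rw [hre]
  simp_rw [← RCLike.re_to_complex]
  rw [integral_re hint, RCLike.re_to_complex]
  have hsplit : ∀ p : (Fin n → ℝ) × ℝ,
      Complex.exp (Complex.I * ((∑ j, a j * p.1 j) + κ * p.2 : ℝ))
      = Complex.exp (Complex.I * (∑ j, a j * p.1 j)) * Complex.exp ((Complex.I * κ) * p.2) := by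
    intro p
    rw [← Complex.exp_add]
    congr 1
    push_cast
    ring
  simp_rw [hsplit]
  rw [integral_prod_mul (f := fun w : Fin n → ℝ => Complex.exp (Complex.I * ((∑ j, a j * w j : ℝ) : ℂ)))
    (g := fun b : ℝ => Complex.exp (Complex.I * (κ : ℂ) * b)), integral_gauss_pi_cexp, integral_gauss_cexp, ← Complex.exp_add]
  have h6 : (-(∑ j, (a j) ^ 2 : ℝ) / 2 : ℂ) + (Complex.I * κ) ^ 2 / 2
      = ((-((∑ j, (a j) ^ 2) + κ ^ 2) / 2 : ℝ) : ℂ) := by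
    rw [mul_pow, Complex.I_sq]
    push_cast
    ring
  rw [h6, ← Complex.ofReal_exp, Complex.ofReal_re]

theorem shallow_ssn_sigma_dot (n : ℕ) (ω : ℝ) (x x' : Fin n → ℝ) :
    ∫ p : (Fin n → ℝ) × ℝ,
        Real.cos (ω * ((∑ j, p.1 j * x j) + p.2)) *
          Real.cos (ω * ((∑ j, p.1 j * x' j) + p.2))
        ∂((Measure.pi fun _ : Fin n => gaussianReal 0 1).prod (gaussianReal 0 1)) =
      1 / 2 * (Real.exp (-(ω ^ 2 / 2) * ∑ j, (x j - x' j) ^ 2) +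
        Real.exp (-(ω ^ 2 / 2) * ∑ j, (x j + x' j) ^ 2) * Real.exp (-2 * ω ^ 2)) := by
  have hpt : ∀ p : (Fin n → ℝ) × ℝ,
      Real.cos (ω * ((∑ j, p.1 j * x j) + p.2)) * Real.cos (ω * ((∑ j, p.1 j * x' j) + p.2))
      = 1 / 2 * Real.cos ((∑ j, (ω * (x j - x' j)) * p.1 j) + (0 : ℝ) * p.2)
        + 1 / 2 * Real.cos ((∑ j, (ω * (x j + x' j)) * p.1 j) + (2 * ω) * p.2) := by
    intro p
    have hs1 : ∑ j, (ω * (x j - x' j)) * p.1 j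
        = ω * (∑ j, p.1 j * x j) - ω * (∑ j, p.1 j * x' j) := by
      rw [Finset.mul_sum, Finset.mul_sum, ← Finset.sum_sub_distrib]
      exact Finset.sum_congr rfl fun j _ => by ring
    have hs2 : ∑ j, (ω * (x j + x' j)) * p.1 j
        = ω * (∑ j, p.1 j * x j) + ω * (∑ j, p.1 j * x' j) := by
      rw [Finset.mul_sum, Finset.mul_sum, ← Finset.sum_add_distrib]
      exact Finset.sum_congr rfl fun j _ => by ring
    have e1 : (∑ j, (ω * (x j - x' j)) * p.1 j) + (0 : ℝ) * p.2
        = ω * ((∑ j, p.1 j * x j) + p.2) - ω * ((∑ j, p.1 j * x' j) + p.2) := by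
      rw [hs1]; ring
    have e2 : (∑ j, (ω * (x j + x' j)) * p.1 j) + (2 * ω) * p.2
        = ω * ((∑ j, p.1 j * x j) + p.2) + ω * ((∑ j, p.1 j * x' j) + p.2) := by
      rw [hs2]; ring
    rw [e1, e2, Real.cos_sub, Real.cos_add]
    ring
  simp_rw [hpt]
  have hi : ∀ (a : Fin n → ℝ) (κ : ℝ), Integrable
      (fun p : (Fin n → ℝ) × ℝ => 1 / 2 * Real.cos ((∑ j, a j * p.1 j) + κ * p.2))
      ((Measure.pi fun _ : Fin n => gaussianReal 0 1).prod (gaussianReal 0 1)) := by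
    intro a κ
    have hm : Measurable
        (fun p : (Fin n → ℝ) × ℝ => 1 / 2 * Real.cos ((∑ j, a j * p.1 j) + κ * p.2)) := by
      fun_prop
    refine Integrable.mono' (integrable_const (1 / 2 : ℝ)) hm.aestronglyMeasurable ?_
    filter_upwards with p
    rw [Real.norm_eq_abs, abs_mul]
    have h1 := Real.abs_cos_le_one ((∑ j, a j * p.1 j) + κ * p.2)
    rw [_root_.abs_of_nonneg (by norm_num : (0:ℝ) ≤ 1/2)]
    nlinarith
  rw [integral_add (hi _ _) (hi _ _), integral_const_mul, integral_const_mul, key_cos, key_cos]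
  have s1 : ∑ j, (ω * (x j - x' j)) ^ 2 = ω ^ 2 * ∑ j, (x j - x' j) ^ 2 := by
    rw [Finset.mul_sum]; exact Finset.sum_congr rfl fun j _ => by ring
  have s2 : ∑ j, (ω * (x j + x' j)) ^ 2 = ω ^ 2 * ∑ j, (x j + x' j) ^ 2 := by
    rw [Finset.mul_sum]; exact Finset.sum_congr rfl fun j _ => by ring
  have t1 : -((ω ^ 2 * ∑ j, (x j - x' j) ^ 2) + (0:ℝ) ^ 2) / 2
      = -(ω ^ 2 / 2) * ∑ j, (x j - x' j) ^ 2 := by ring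
  have t2 : -((ω ^ 2 * ∑ j, (x j + x' j) ^ 2) + (2 * ω) ^ 2) / 2
      = (-(ω ^ 2 / 2) * ∑ j, (x j + x' j) ^ 2) + (-2 * ω ^ 2) := by ring
  rw [s1, s2, t1, t2, Real.exp_add]
  ring
end
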